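/- Let k ≥ 2 and let f : ℕ → ℝ be a k-automatic sequence, that is, f is generated by a k-DFAO (Q, δ, q₀, τ) with real-valued output function τ : Q → ℝ, reading base-k digits least-significant-digit first. Then f is strongly k-recursive: there exist natural numbers r < t such that for every b with 0 ≤ b < k^t there exist real coefficients c_a (0 ≤ a < k^r) with f(k^t·n + b) = Σ_{0 ≤ a < k^r} c_a·f(k^r·n + a) for all n ≥ 0. -/

import Mathlib

/-- Extended transition function of a DFAO, reading the word left to right
(least-significant digit first): `dstar δ q [] = q` and
`dstar δ q (d :: w) = dstar δ (δ q d) w`. -/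
def dstar {Q D : Type*} (δ : Q → D → Q) : Q → List D → Q
  | q, [] => q
  | q, d :: w => dstar δ (δ q d) w

/-- Base-`k` digits of `a`, padded (or truncated) to length `r`. -/
def padDigits (k : ℕ) : ℕ → ℕ → List ℕ
  | 0, _ => []
  | r + 1, a => a % k :: padDigits k r (a / k)

lemma dstar_append {Q D : Type*} (δ : Q → D → Q) (l₁ l₂ : List D) (q : Q) :
    dstar δ q (l₁ ++ l₂) = dstar δ (dstar δ q l₁) l₂ := by
  induction l₁ generalizing q with
  | nil => rfl
  | cons d w ih => simp [dstar, ih]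

lemma digits_pow_mul_add (k : ℕ) (hk : 2 ≤ k) :
    ∀ r a n, a < k ^ r → 1 ≤ n →
      Nat.digits k (k ^ r * n + a) = padDigits k r a ++ Nat.digits k n
  | 0, a, n, ha, hn => by
      have : a = 0 := by simpa using ha
      subst this
      simp [padDigits]
  | r + 1, a, n, ha, hn => by
      have hk0 : 0 < k := by omega
      have hpos : 0 < k ^ (r + 1) * n + a := by
        have : 0 < k ^ (r + 1) := Nat.pow_pos hk0
        nlinarith
    --
      have hco : k ^ (r + 1) * n + a = k * (k ^ r * n) + a := by ring
      rw [Nat.digits_def' (by omega : 1 < k) hpos, hco,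
        Nat.mul_add_mod, Nat.mul_add_div hk0]
      have ha' : a / k < k ^ r := by
        rw [Nat.div_lt_iff_lt_mul hk0]
        calc a < k ^ (r + 1) := ha
        _ = k ^ r * k := by ring
      rw [show k ^ r * n + a / k = k ^ r * n + a / k from rfl,
        digits_pow_mul_add k hk r (a / k) n ha' hn]
      simp [padDigits]

theorem stmt_10 (k : ℕ) (hk : 2 ≤ k) {Q : Type*} [Fintype Q]
    (δ : Q → Fin k → Q) (q₀ : Q) (τ : Q → ℝ) (f : ℕ → ℝ)
    (hf : ∀ n : ℕ, f n =
      τ (dstar (fun (q : Q) (d : ℕ) => δ q ⟨d % k, Nat.mod_lt d (by omega)⟩)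
          q₀ (Nat.digits k n))) :
    ∃ r t : ℕ, r < t ∧ ∀ b < k ^ t, ∃ c : ℕ → ℝ,
      ∀ n : ℕ, f (k ^ t * n + b) =
        ∑ a ∈ Finset.range (k ^ r), c a * f (k ^ r * n + a) := by
  classical
  set δ' : Q → ℕ → Q := fun q d => δ q ⟨d % k, Nat.mod_lt d (by omega)⟩ with hδ'
  have hf' : ∀ n : ℕ, f n = τ (dstar δ' q₀ (Nat.digits k n)) := hf
  set st : ℕ → ℕ → Q × Q := fun r a =>
    (dstar δ' q₀ (padDigits k r a), dstar δ' q₀ (Nat.digits k a)) with hst_def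
  have key : ∀ r a, a < k ^ r → ∀ r' a', a' < k ^ r' → st r a = st r' a' →
      ∀ n, f (k ^ r * n + a) = f (k ^ r' * n + a') := by
    intro r a ha r' a' ha' hst n
    rcases Nat.eq_zero_or_pos n with rfl | hn
    · simp only [mul_zero, zero_add]
      rw [hf' a, hf' a']
      have h2 := congrArg Prod.snd hst
      simp only [hst_def] at h2
      rw [h2]
    · rw [hf', hf', digits_pow_mul_add k hk r a n ha hn,
        digits_pow_mul_add k hk r' a' n ha' hn, dstar_append, dstar_append]
      have h1 := congrArg Prod.fst hst
      simp only [hst_def] at h1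
      rw [h1]
  obtain ⟨x, y, hxy, hK⟩ :=
    Finite.exists_ne_map_eq_of_infinite (fun r : ℕ => st r '' Set.Iio (k ^ r))
  obtain ⟨r, t, hrt, hKrt⟩ :
      ∃ r t, r < t ∧ st t '' Set.Iio (k ^ t) = st r '' Set.Iio (k ^ r) := by
    rcases hxy.lt_or_gt with h | h
    · exact ⟨x, y, h, hK.symm⟩
    · exact ⟨y, x, h, hK⟩
  refine ⟨r, t, hrt, fun b hb => ?_⟩
  have hb' : st t b ∈ st t '' Set.Iio (k ^ t) := ⟨b, hb, rfl⟩
  rw [hKrt] at hb'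
  obtain ⟨a, ha, hsteq⟩ := hb'
  refine ⟨fun x => if x = a then 1 else 0, fun n => ?_⟩
  rw [← key r a ha t b hb hsteq n]
  rw [Finset.sum_eq_single a]
  · simp
  · intro x _ hne
    simp [hne]
  · intro h
    exact absurd (Finset.mem_range.mpr ha) h
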